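/- The Cantor CDF maps rationals to rationals: if x ∈ ℚ ∩ [0,1], then F_B(x) ∈ ℚ. -/

import Mathlib

open MeasureTheory Set
open scoped ENNReal

lemma cantor_restrict (μ : Measure ℝ) [IsProbabilityMeasure μ]
    (hsupp : μ (Set.Icc 0 1) = 1) (A : Set ℝ) : μ A = μ (A ∩ Icc 0 1) := by
  have h1 : μ (A ∩ Icc 0 1) + μ (A \ Icc 0 1) = μ A :=
    measure_inter_add_diff A measurableSet_Icc
  have hc : μ (Icc (0:ℝ) 1)ᶜ = 0 := by
    rw [measure_compl measurableSet_Icc (measure_ne_top μ _), hsupp, measure_univ, tsub_self]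
  have h2 : μ (A \ Icc 0 1) = 0 := measure_mono_null (fun y hy => hy.2) hc
  rw [← h1, h2, add_zero]

lemma cantor_rec (N : ℕ) (hN : 3 ≤ N) (D : Finset ℕ)
    (μ : Measure ℝ) [IsProbabilityMeasure μ]
    (hsupp : μ (Set.Icc 0 1) = 1)
    (hinv : μ = (D.card : ℝ≥0∞)⁻¹ • ∑ d ∈ D, μ.map (fun x : ℝ => (x + (d : ℝ)) / N))
    (x : ℝ) (hx0 : 0 ≤ x) (hx1 : x < 1) :
    μ (Icc 0 x) = (D.card : ℝ≥0∞)⁻¹ *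
      (((D.filter (fun d : ℕ => (d:ℝ) + 1 ≤ (N:ℝ) * x)).card : ℝ≥0∞)
        + (if (⌊(N:ℝ) * x⌋).toNat ∈ D then μ (Icc 0 (Int.fract ((N:ℝ)*x))) else 0)) := by
  have hNpos : (0:ℝ) < N := by
    have : (3:ℝ) ≤ N := by exact_mod_cast hN
    linarith
  set y := (N:ℝ) * x with hy
  have hy0 : 0 ≤ y := by positivity
  have hz0 : (0:ℤ) ≤ ⌊y⌋ := Int.floor_nonneg.mpr hy0
  have hzc : ((⌊y⌋.toNat : ℕ) : ℝ) = ((⌊y⌋ : ℤ) : ℝ) := by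
    exact_mod_cast congrArg (fun z : ℤ => (z : ℝ)) (Int.toNat_of_nonneg hz0)
  have hfl : (⌊y⌋ : ℝ) ≤ y := Int.floor_le y
  have hfl2 : y < (⌊y⌋ : ℝ) + 1 := Int.lt_floor_add_one y
  have key : ∀ d : ℕ, μ ((fun t : ℝ => (t + (d:ℝ)) / N) ⁻¹' Icc 0 x)
      = (if (d:ℝ) + 1 ≤ y then (1:ℝ≥0∞) else 0)
        + (if d = ⌊y⌋.toNat then μ (Icc 0 (Int.fract y)) else 0) := by
    intro d
    have hpre : (fun t : ℝ => (t + (d:ℝ)) / N) ⁻¹' Icc 0 x = Icc (-(d:ℝ)) (y - d) := by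
      ext t
      simp only [mem_preimage, mem_Icc, le_div_iff₀ hNpos, div_le_iff₀ hNpos]
      constructor
      · rintro ⟨a, b⟩; constructor <;> nlinarith
      · rintro ⟨a, b⟩; constructor <;> nlinarith
    rw [hpre, cantor_restrict μ hsupp, Icc_inter_Icc,
        max_eq_right (neg_nonpos.mpr (by positivity : (0:ℝ) ≤ (d:ℝ)))]
    by_cases h1 : (d:ℝ) + 1 ≤ y
    · have hne : d ≠ ⌊y⌋.toNat := by
        intro h
        rw [h, hzc] at h1
        linarith
      rw [if_pos h1, if_neg hne, min_eq_right (by linarith), hsupp, add_zero]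
    · rw [if_neg h1]
      by_cases h2 : d = ⌊y⌋.toNat
      · subst h2
        rw [if_pos rfl, zero_add]
        have hle : y - ((⌊y⌋.toNat : ℕ):ℝ) ≤ 1 := by rw [hzc]; linarith
        rw [min_eq_left hle]
        congr 2
        rw [Int.fract, hzc]
      · rw [if_neg h2, add_zero]
        rcases le_or_gt (d:ℝ) y with hd | hd
        · exfalso
          apply h2
          have hfe : ⌊y⌋ = (d:ℤ) := by
            rw [Int.floor_eq_iff]
            constructor
            · exact_mod_cast hd
            · push_cast; linarith
          rw [hfe, Int.toNat_natCast]
        · rw [min_eq_left (by linarith), Icc_eq_empty (by simp; linarith), measure_empty]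
  have hmain : μ (Icc 0 x) = (D.card : ℝ≥0∞)⁻¹ *
      ∑ d ∈ D, μ ((fun t : ℝ => (t + (d:ℝ)) / N) ⁻¹' Icc 0 x) := by
    conv_lhs => rw [hinv]
    rw [Measure.smul_apply, Measure.finset_sum_apply, smul_eq_mul]
    congr 1
    refine Finset.sum_congr rfl (fun d _ => ?_)
    exact Measure.map_apply ((measurable_id.add_const _).div_const _) measurableSet_Icc
  rw [hmain]
  congr 1
  rw [Finset.sum_congr rfl (fun d _ => key d), Finset.sum_add_distrib]
  congr 1
  · rw [Finset.sum_boole]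
  · rw [Finset.sum_ite_eq' D (⌊y⌋.toNat) (fun _ => μ (Icc 0 (Int.fract y)))]

noncomputable def Fc (μ : Measure ℝ) (t : ℝ) : ℝ := (μ (Icc 0 t)).toReal

def Tq (N : ℕ) (q : ℚ) : ℚ := Int.fract ((N:ℚ) * q)

lemma Tq_mem (N : ℕ) (q : ℚ) : 0 ≤ Tq N q ∧ Tq N q < 1 :=
  ⟨Int.fract_nonneg _, Int.fract_lt_one _⟩

lemma cantor_step (N : ℕ) (hN : 3 ≤ N) (D : Finset ℕ) (hcard : 2 ≤ D.card)
    (μ : Measure ℝ) [IsProbabilityMeasure μ]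
    (hsupp : μ (Set.Icc 0 1) = 1)
    (hinv : μ = (D.card : ℝ≥0∞)⁻¹ • ∑ d ∈ D, μ.map (fun x : ℝ => (x + (d : ℝ)) / N))
    (q : ℚ) (hq0 : 0 ≤ q) (hq1 : q < 1) :
    ∃ A B : ℚ, 0 ≤ B ∧ B ≤ (D.card:ℚ)⁻¹ ∧
      Fc μ (q:ℝ) = A + B * Fc μ ((Tq N q : ℚ) : ℝ) := by
  have hk0 : (0:ℚ) < (D.card:ℚ) := by exact_mod_cast lt_of_lt_of_le (by norm_num) hcard
  have hx0 : (0:ℝ) ≤ (q:ℝ) := by exact_mod_cast hq0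
  have hx1 : ((q:ℝ)) < 1 := by exact_mod_cast hq1
  have hrec := cantor_rec N hN D μ hsupp hinv (q:ℝ) hx0 hx1
  have hcast : (N:ℝ) * (q:ℝ) = (((N:ℚ) * q : ℚ) : ℝ) := by push_cast; ring
  have hfr : Int.fract ((N:ℝ) * (q:ℝ)) = ((Tq N q : ℚ) : ℝ) := by
    rw [hcast, Tq, Int.fract, Int.fract, Rat.floor_cast]; push_cast; ring
  have hfloor : ⌊(N:ℝ) * (q:ℝ)⌋ = ⌊(N:ℚ) * q⌋ := by rw [hcast, Rat.floor_cast]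
  rw [hfr, hfloor] at hrec
  set c : ℕ := (D.filter (fun d : ℕ => (d:ℝ) + 1 ≤ (N:ℝ) * (q:ℝ))).card with hc
  refine ⟨(c:ℚ) / D.card, (if (⌊(N:ℚ) * q⌋).toNat ∈ D then 1 else 0) / D.card, ?_, ?_, ?_⟩
  · split <;> exact div_nonneg (by norm_num) (Nat.cast_nonneg _)
  · split
    · rw [one_div]
    · rw [zero_div]; exact inv_nonneg.mpr (Nat.cast_nonneg _)
  · have hne1 : ((c:ℝ≥0∞)) ≠ ⊤ := ENNReal.natCast_ne_top c
    have hne2 : (if (⌊(N:ℚ) * q⌋).toNat ∈ D then μ (Icc 0 ((Tq N q : ℚ):ℝ)) else 0) ≠ ⊤ := by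
      split
      · exact measure_ne_top μ _
      · exact ENNReal.zero_ne_top
    rw [Fc, hrec, ENNReal.toReal_mul, ENNReal.toReal_add hne1 hne2,
        ENNReal.toReal_inv, ENNReal.toReal_natCast, ENNReal.toReal_natCast]
    by_cases hm : (⌊(N:ℚ) * q⌋).toNat ∈ D
    · rw [if_pos hm, if_pos hm, Fc]
      push_cast
      ring
    · rw [if_neg hm, if_neg hm, ENNReal.toReal_zero]
      push_cast
      ring

lemma cantor_iter (N : ℕ) (hN : 3 ≤ N) (D : Finset ℕ) (hcard : 2 ≤ D.card)
    (μ : Measure ℝ) [IsProbabilityMeasure μ]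
    (hsupp : μ (Set.Icc 0 1) = 1)
    (hinv : μ = (D.card : ℝ≥0∞)⁻¹ • ∑ d ∈ D, μ.map (fun x : ℝ => (x + (d : ℝ)) / N))
    (q : ℚ) (hq0 : 0 ≤ q) (hq1 : q < 1) (n : ℕ) :
    ∃ A B : ℚ, 0 ≤ B ∧ B ≤ ((D.card:ℚ)⁻¹)^n ∧
      Fc μ (q:ℝ) = A + B * Fc μ ((((Tq N)^[n] q : ℚ)) : ℝ) := by
  have hiter : ∀ m : ℕ, 0 ≤ (Tq N)^[m] q ∧ (Tq N)^[m] q < 1 := by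
    intro m
    cases m with
    | zero => exact ⟨hq0, hq1⟩
    | succ m => rw [Function.iterate_succ_apply']; exact Tq_mem N _
  induction n with
  | zero => exact ⟨0, 1, by norm_num, by norm_num, by simp⟩
  | succ n ih =>
    obtain ⟨A, B, hB0, hB1, hF⟩ := ih
    obtain ⟨A', B', hB0', hB1', hF'⟩ :=
      cantor_step N hN D hcard μ hsupp hinv ((Tq N)^[n] q) (hiter n).1 (hiter n).2
    have hki : (0:ℚ) ≤ (D.card:ℚ)⁻¹ := inv_nonneg.mpr (Nat.cast_nonneg _)
    refine ⟨A + B * A', B * B', mul_nonneg hB0 hB0', ?_, ?_⟩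
    · calc B * B' ≤ ((D.card:ℚ)⁻¹)^n * (D.card:ℚ)⁻¹ :=
            mul_le_mul hB1 hB1' hB0' (pow_nonneg hki n)
        _ = ((D.card:ℚ)⁻¹)^(n+1) := by ring
    · rw [Function.iterate_succ_apply', hF, hF']
      push_cast
      ring

lemma cantor_rat (N : ℕ) (hN : 3 ≤ N) (D : Finset ℕ) (hcard : 2 ≤ D.card)
    (μ : Measure ℝ) [IsProbabilityMeasure μ]
    (hsupp : μ (Set.Icc 0 1) = 1)
    (hinv : μ = (D.card : ℝ≥0∞)⁻¹ • ∑ d ∈ D, μ.map (fun x : ℝ => (x + (d : ℝ)) / N))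
    (q : ℚ) (hq0 : 0 ≤ q) (hq1 : q < 1) :
    ∃ r : ℚ, Fc μ (q:ℝ) = (r:ℝ) := by
  have hiter : ∀ m : ℕ, 0 ≤ (Tq N)^[m] q ∧ (Tq N)^[m] q < 1 := by
    intro m
    cases m with
    | zero => exact ⟨hq0, hq1⟩
    | succ m => rw [Function.iterate_succ_apply']; exact Tq_mem N _
  have hint : ∀ n : ℕ, ∃ z : ℤ, ((Tq N)^[n] q) * (q.den:ℚ) = (z:ℚ) := by
    intro n
    induction n with
    | zero => exact ⟨q.num, by rw [Function.iterate_zero_apply]; exact Rat.mul_den_eq_num q⟩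
    | succ n ih =>
      obtain ⟨z, hz⟩ := ih
      refine ⟨N * z - ⌊(N:ℚ) * ((Tq N)^[n] q)⌋ * (q.den:ℤ), ?_⟩
      rw [Function.iterate_succ_apply', Tq, Int.fract]
      push_cast
      linear_combination (N:ℚ) * hz
  set g : ℕ → ℤ := fun n => ⌊((Tq N)^[n] q) * (q.den:ℚ)⌋ with hg
  have hden : (0:ℚ) < (q.den:ℚ) := by exact_mod_cast q.pos
  have hmaps : ∀ n ∈ Finset.range (q.den + 1), g n ∈ Finset.Ico (0:ℤ) (q.den:ℤ) := by
    intro n _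
    rw [Finset.mem_Ico]
    constructor
    · exact Int.floor_nonneg.mpr (mul_nonneg (hiter n).1 hden.le)
    · apply Int.floor_lt.mpr
      push_cast
      nlinarith [(hiter n).2, (hiter n).1]
  have hlt : (Finset.Ico (0:ℤ) (q.den:ℤ)).card < (Finset.range (q.den + 1)).card := by
    rw [Finset.card_range, Int.card_Ico]
    simp
  obtain ⟨a, _, b, _, hab, hgab⟩ :=
    Finset.exists_ne_map_eq_of_card_lt_of_maps_to hlt hmaps
  have main : ∀ a b : ℕ, a < b → g a = g b → ∃ r : ℚ, Fc μ (q:ℝ) = (r:ℝ) := by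
    intro a b hlt' hgeq
    obtain ⟨z, hz⟩ := hint a
    obtain ⟨w, hw⟩ := hint b
    have hzw : z = w := by
      have h1 : g a = z := by rw [hg]; simp only []; rw [hz, Int.floor_intCast]
      have h2 : g b = w := by rw [hg]; simp only []; rw [hw, Int.floor_intCast]
      rw [← h1, ← h2, hgeq]
    have hreq : (Tq N)^[a] q = (Tq N)^[b] q := by
      have : ((Tq N)^[a] q) * (q.den:ℚ) = ((Tq N)^[b] q) * (q.den:ℚ) := by
        rw [hz, hw, hzw]
      exact mul_right_cancel₀ (ne_of_gt hden) this
    set p := b - a with hp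
    have hp1 : 1 ≤ p := by omega
    have hba : p + a = b := by omega
    obtain ⟨A, B, hB0, hB1, hF⟩ :=
      cantor_iter N hN D hcard μ hsupp hinv ((Tq N)^[a] q) (hiter a).1 (hiter a).2 p
    have hTp : (Tq N)^[p] ((Tq N)^[a] q) = (Tq N)^[a] q := by
      rw [← Function.iterate_add_apply, hba, ← hreq]
    rw [hTp] at hF
    have hk2 : (2:ℚ) ≤ (D.card:ℚ) := by exact_mod_cast hcard
    have hki : (D.card:ℚ)⁻¹ ≤ (2:ℚ)⁻¹ := inv_anti₀ (by norm_num) hk2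
    have hBlt : B < 1 := by
      have h3 : ((D.card:ℚ)⁻¹)^p ≤ ((D.card:ℚ)⁻¹)^1 :=
        pow_le_pow_of_le_one (inv_nonneg.mpr (Nat.cast_nonneg _)) (by linarith) hp1
      rw [pow_one] at h3
      linarith
    have hBlt' : (B:ℝ) < 1 := by exact_mod_cast hBlt
    have hFval : Fc μ (((Tq N)^[a] q : ℚ):ℝ) = ((A / (1 - B) : ℚ) : ℝ) := by
      push_cast
      rw [eq_div_iff (by intro h; apply absurd hBlt' (by intro _; linarith [sub_eq_zero.mp h]) : (1:ℝ) - (B:ℝ) ≠ 0)]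
      linarith [hF]
    obtain ⟨A0, B0, _, _, hF0⟩ :=
      cantor_iter N hN D hcard μ hsupp hinv q hq0 hq1 a
    refine ⟨A0 + B0 * (A / (1 - B)), ?_⟩
    rw [hF0, hFval]
    push_cast
    ring
  rcases lt_or_gt_of_ne hab with h | h
  · exact main a b h hgab
  · exact main b a h hgab.symm

theorem cantor_cdf_rational_to_rational
    (N : ℕ) (hN : 3 ≤ N) (D : Finset ℕ) (hD : D ⊆ Finset.range N)
    (hcard : 2 ≤ D.card) (hcard' : D.card ≤ N - 1)
    (μ : Measure ℝ) [IsProbabilityMeasure μ]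
    (hsupp : μ (Set.Icc 0 1) = 1)
    (hinv : μ = (D.card : ℝ≥0∞)⁻¹ • ∑ d ∈ D, μ.map (fun x : ℝ => (x + (d : ℝ)) / N)) :
    ∀ x ∈ Set.Icc (0:ℝ) 1, (∃ q : ℚ, x = (q : ℝ)) →
      ∃ q : ℚ, (μ (Set.Icc 0 x)).toReal = (q : ℝ) := by
  rintro x ⟨hx0, hx1⟩ ⟨q, rfl⟩
  by_cases h : q = 1
  · subst h
    refine ⟨1, ?_⟩
    rw [Rat.cast_one, hsupp]
    norm_num
  · have hq0 : 0 ≤ q := by exact_mod_cast hx0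
    have hq1 : q < 1 := lt_of_le_of_ne (by exact_mod_cast hx1) h
    exact cantor_rat N hN D hcard μ hsupp hinv q hq0 hq1
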